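/- For any tripartite density matrix ψ^{ABE} and any POVM {Λ_z} on E, with Υ = Σ_z |z⟩⟨z|_A ⊗ Λ_z^E and any state σ^E, one has Tr[Υ(ψ_Z^{AE} − π^A ⊗ σ^E)] = (Σ_z Tr[(|z⟩⟨z| ⊗ Λ_z)ψ^{AE}]) − 1/d; consequently (P(Z^A|E)_ψ − 1/d)² + F(ψ_Z^{AE}, π^A ⊗ σ^E)² ≤ 1. -/

import Mathlib

open Matrix Kronecker Complex BigOperators
open scoped ComplexOrder Classical

noncomputable section

/-- primitive d-th root of unity -/
def omg (d : ℕ) : ℂ := Complex.exp (2 * Real.pi * Complex.I / d)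

/-- standard basis vector |z⟩ -/
def ketZ (d : ℕ) (z : Fin d) : Fin d → ℂ := fun i => if i = z then 1 else 0

/-- Fourier basis vector |x̃⟩ = (1/√d) Σ_z ω^{xz} |z⟩ -/
def ketX (d : ℕ) (x : Fin d) : Fin d → ℂ :=
  fun z => ((1 / Real.sqrt d : ℝ) : ℂ) * omg d ^ ((x : ℕ) * (z : ℕ))

/-- projector |z⟩⟨z| -/
def projZ (d : ℕ) (z : Fin d) : Matrix (Fin d) (Fin d) ℂ :=
  Matrix.vecMulVec (ketZ d z) (star (ketZ d z))

/-- projector |x̃⟩⟨x̃| -/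
def projX (d : ℕ) (x : Fin d) : Matrix (Fin d) (Fin d) ℂ :=
  Matrix.vecMulVec (ketX d x) (star (ketX d x))

/-- positive semidefinite square root (0 if not PSD) -/
def msqrt {n : Type*} [Fintype n] [DecidableEq n] (M : Matrix n n ℂ) : Matrix n n ℂ :=
  if h : M.PosSemidef then
    (h.1.eigenvectorUnitary : Matrix n n ℂ) * Matrix.diagonal ((↑) ∘ (√·) ∘ h.1.eigenvalues) *
      (star h.1.eigenvectorUnitary : Matrix n n ℂ) else 0

/-- trace norm ‖M‖₁ = Tr √(MᴴM) -/
def trNorm {n : Type*} [Fintype n] [DecidableEq n] (M : Matrix n n ℂ) : ℝ :=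
  (msqrt (Mᴴ * M)).trace.re

/-- fidelity F(ρ,σ) = ‖√ρ√σ‖₁ -/
def Fid {n : Type*} [Fintype n] [DecidableEq n] (ρ σ : Matrix n n ℂ) : ℝ :=
  trNorm (msqrt ρ * msqrt σ)

/-- a POVM with d outcomes -/
def IsPOVM {n : Type*} [Fintype n] [DecidableEq n] {d : ℕ} (Λ : Fin d → Matrix n n ℂ) : Prop :=
  (∀ z, (Λ z).PosSemidef) ∧ ∑ z, Λ z = 1

/-- optimal guessing probability of the measurement with rank-one elements P z on A,
given the B part of the bipartite state ψ -/
def Pguess {d : ℕ} {β : Type*} [Fintype β] [DecidableEq β]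
    (P : Fin d → Matrix (Fin d) (Fin d) ℂ) (ψ : Matrix (Fin d × β) (Fin d × β) ℂ) : ℝ :=
  sSup { r | ∃ Λ : Fin d → Matrix β β ℂ, IsPOVM Λ ∧
    r = (Matrix.trace ((∑ z, P z ⊗ₖ Λ z) * ψ)).re }

/-- dephasing the first (A) system in the standard basis -/
def dephA {d : ℕ} {γ : Type*} [Fintype γ] [DecidableEq γ]
    (M : Matrix (Fin d × γ) (Fin d × γ) ℂ) : Matrix (Fin d × γ) (Fin d × γ) ℂ :=
  ∑ z : Fin d, (projZ d z ⊗ₖ (1 : Matrix γ γ ℂ)) * M * (projZ d z ⊗ₖ (1 : Matrix γ γ ℂ))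

/-- partial trace over the middle (B) system of a tripartite A ⊗ B ⊗ E matrix -/
def ptrB {α β γ : Type*} [Fintype β] (M : Matrix (α × β × γ) (α × β × γ) ℂ) :
    Matrix (α × γ) (α × γ) ℂ :=
  fun p q => ∑ b : β, M (p.1, b, p.2) (q.1, b, q.2)

/-- P(X^A|B)_ψ for a tripartite state ψ^{ABE}: optimal guessing of X on A
by POVMs on B alone. -/
def PX_B {d : ℕ} {β γ : Type*} [Fintype β] [DecidableEq β] [Fintype γ] [DecidableEq γ]
    (ψ : Matrix (Fin d × β × γ) (Fin d × β × γ) ℂ) : ℝ :=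
  sSup { r | ∃ Γ : Fin d → Matrix β β ℂ, IsPOVM Γ ∧
    r = (Matrix.trace ((∑ x, projX d x ⊗ₖ (Γ x ⊗ₖ (1 : Matrix γ γ ℂ))) * ψ)).re }

/-- P(Z^A|E)_ψ for a tripartite state ψ^{ABE}: optimal guessing of Z on A
by POVMs on E alone. -/
def PZ_E {d : ℕ} {β γ : Type*} [Fintype β] [DecidableEq β] [Fintype γ] [DecidableEq γ]
    (ψ : Matrix (Fin d × β × γ) (Fin d × β × γ) ℂ) : ℝ :=
  sSup { r | ∃ Λ : Fin d → Matrix γ γ ℂ, IsPOVM Λ ∧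
    r = (Matrix.trace ((∑ z, projZ d z ⊗ₖ ((1 : Matrix β β ℂ) ⊗ₖ Λ z)) * ψ)).re }

/-- the Z-measured reduced state ψ_Z^{AE} -/
def psiZAE {d : ℕ} {β γ : Type*} [Fintype β] [DecidableEq β] [Fintype γ] [DecidableEq γ]
    (ψ : Matrix (Fin d × β × γ) (Fin d × β × γ) ℂ) : Matrix (Fin d × γ) (Fin d × γ) ℂ :=
  dephA (ptrB ψ)


/-! ### Helper lemmas -/

section Helpers

variable {n m : Type*} [Fintype n] [DecidableEq n] [Fintype m] [DecidableEq m]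

lemma psd_diag_nonneg {M : Matrix n n ℂ} (hM : M.PosSemidef) (i : n) : 0 ≤ M i i := by
  exact hM.diag_nonneg

lemma psd_trace_nonneg {M : Matrix n n ℂ} (hM : M.PosSemidef) : 0 ≤ M.trace :=
  Finset.sum_nonneg fun i _ => psd_diag_nonneg hM i

lemma nonneg_re_eq {z : ℂ} (hz : 0 ≤ z) : (z.re : ℂ) = z := by
  rw [Complex.le_def] at hz
  exact (Complex.re_add_im z) ▸ by simp [← hz.2]

lemma trace_mul_psd_nonneg {X Y : Matrix n n ℂ} (hX : X.PosSemidef) (hY : Y.PosSemidef) :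
    0 ≤ (X * Y).trace := by
  obtain ⟨B, hB⟩ : ∃ B : Matrix n n ℂ, Y = Bᴴ * B := by
    open scoped MatrixOrder in exact CStarAlgebra.nonneg_iff_eq_star_mul_self.mp hY.nonneg
  subst hB
  rw [← Matrix.mul_assoc, Matrix.trace_mul_cycle]
  exact psd_trace_nonneg (hX.mul_mul_conjTranspose_same B)

lemma trace_mul_psd_re_nonneg {X Y : Matrix n n ℂ} (hX : X.PosSemidef) (hY : Y.PosSemidef) :
    0 ≤ ((X * Y).trace).re := by
  have := trace_mul_psd_nonneg hX hY
  rw [Complex.le_def] at this; simpa using this.1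

omit [DecidableEq n] in
lemma herm_trace_im {M : Matrix n n ℂ} (hM : M.IsHermitian) : M.trace.im = 0 := by
  have h := Matrix.trace_conjTranspose M
  rw [hM.eq] at h
  have := congrArg Complex.im h
  simp at this
  linarith

omit [Fintype n] [DecidableEq n] [Fintype m] [DecidableEq m] in
lemma kron_conjTranspose (A : Matrix n n ℂ) (B : Matrix m m ℂ) :
    (A ⊗ₖ B)ᴴ = Aᴴ ⊗ₖ Bᴴ := by
  ext ⟨i, j⟩ ⟨k, l⟩
  simp [Matrix.conjTranspose_apply, Matrix.kronecker_apply]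

lemma psd_kron {A : Matrix n n ℂ} {B : Matrix m m ℂ} (hA : A.PosSemidef) (hB : B.PosSemidef) :
    (A ⊗ₖ B).PosSemidef := by
  obtain ⟨C, hC⟩ : ∃ C : Matrix n n ℂ, A = Cᴴ * C := by
    open scoped MatrixOrder in exact CStarAlgebra.nonneg_iff_eq_star_mul_self.mp hA.nonneg
  obtain ⟨D, hD⟩ : ∃ D : Matrix m m ℂ, B = Dᴴ * D := by
    open scoped MatrixOrder in exact CStarAlgebra.nonneg_iff_eq_star_mul_self.mp hB.nonneg
  subst hC hD
  rw [Matrix.mul_kronecker_mul, ← kron_conjTranspose]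
  exact Matrix.posSemidef_conjTranspose_mul_self _

lemma msqrt_of_psd {M : Matrix n n ℂ} (hM : M.PosSemidef) : msqrt M =
    (hM.1.eigenvectorUnitary : Matrix n n ℂ) * Matrix.diagonal ((↑) ∘ (√·) ∘ hM.1.eigenvalues) *
      (star hM.1.eigenvectorUnitary : Matrix n n ℂ) := dif_pos hM

lemma msqrt_psd {M : Matrix n n ℂ} (hM : M.PosSemidef) : (msqrt M).PosSemidef := by
  rw [msqrt_of_psd hM]
  have hD : (Matrix.diagonal ((↑) ∘ (√·) ∘ hM.1.eigenvalues) : Matrix n n ℂ).PosSemidef :=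
    Matrix.PosSemidef.diagonal (fun i => Complex.zero_le_real.mpr (Real.sqrt_nonneg _))
  exact hD.mul_mul_conjTranspose_same (hM.1.eigenvectorUnitary : Matrix n n ℂ)

lemma msqrt_mul_self {M : Matrix n n ℂ} (hM : M.PosSemidef) : msqrt M * msqrt M = M := by
  rw [msqrt_of_psd hM]
  have h1 : (star hM.1.eigenvectorUnitary : Matrix n n ℂ) *
      (hM.1.eigenvectorUnitary : Matrix n n ℂ) = 1 := by
    simpa using hM.1.eigenvectorUnitary.2.1
  have hsp : M = (hM.1.eigenvectorUnitary : Matrix n n ℂ) *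
      Matrix.diagonal (fun i => (hM.1.eigenvalues i : ℂ)) *
      (star hM.1.eigenvectorUnitary : Matrix n n ℂ) := hM.1.spectral_theorem
  have hff : (((↑) ∘ (√·) ∘ hM.1.eigenvalues) * ((↑) ∘ (√·) ∘ hM.1.eigenvalues) : n → ℂ)
      = fun i => (hM.1.eigenvalues i : ℂ) := by
    funext i
    simp only [Pi.mul_apply, Function.comp_apply]
    rw [← Complex.ofReal_mul, Real.mul_self_sqrt (hM.eigenvalues_nonneg i)]
  conv_rhs => rw [hsp]
  simp only [Matrix.mul_assoc]
  rw [← Matrix.mul_assoc (star hM.1.eigenvectorUnitary : Matrix n n ℂ)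
    (hM.1.eigenvectorUnitary : Matrix n n ℂ), h1, Matrix.one_mul,
    ← Matrix.mul_assoc (Matrix.diagonal _), Matrix.diagonal_mul_diagonal']
  rw [show (fun i => ((↑) ∘ (√·) ∘ hM.1.eigenvalues) i * ((↑) ∘ (√·) ∘ hM.1.eigenvalues) i :
    n → ℂ) = _ from hff]

lemma msqrt_herm {M : Matrix n n ℂ} (hM : M.PosSemidef) : (msqrt M)ᴴ = msqrt M :=
  (msqrt_psd hM).isHermitian.eq

end Helpers

/-! ### Polar decomposition ingredients -/

section Polar

set_option linter.unusedSectionVars false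

variable {n : Type*} [Fintype n] [DecidableEq n]

/-- conjugation by the eigenvector unitary of a Hermitian matrix -/
def specC {H : Matrix n n ℂ} (hH : H.IsHermitian) (f : n → ℂ) : Matrix n n ℂ :=
  (hH.eigenvectorUnitary : Matrix n n ℂ) * Matrix.diagonal f *
    (star hH.eigenvectorUnitary : Matrix n n ℂ)

lemma specC_mul {H : Matrix n n ℂ} (hH : H.IsHermitian) (f g : n → ℂ) :
    specC hH f * specC hH g = specC hH (f * g) := by
  have h1 : (star hH.eigenvectorUnitary : Matrix n n ℂ) *
      (hH.eigenvectorUnitary : Matrix n n ℂ) = 1 := by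
    simpa using hH.eigenvectorUnitary.2.1
  simp only [specC, Matrix.mul_assoc]
  rw [← Matrix.mul_assoc (star hH.eigenvectorUnitary : Matrix n n ℂ)
    (hH.eigenvectorUnitary : Matrix n n ℂ), h1, Matrix.one_mul,
    ← Matrix.mul_assoc (Matrix.diagonal f), Matrix.diagonal_mul_diagonal]
  rfl

lemma specC_conjTranspose {H : Matrix n n ℂ} (hH : H.IsHermitian) (f : n → ℂ) :
    (specC hH f)ᴴ = specC hH (star f) := by
  rw [specC, Matrix.conjTranspose_mul, Matrix.conjTranspose_mul]
  simp [specC, Matrix.star_eq_conjTranspose, Matrix.diagonal_conjTranspose, Matrix.mul_assoc]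

lemma specC_trace {H : Matrix n n ℂ} (hH : H.IsHermitian) (f : n → ℂ) :
    (specC hH f).trace = ∑ i, f i := by
  have h1 : (star hH.eigenvectorUnitary : Matrix n n ℂ) *
      (hH.eigenvectorUnitary : Matrix n n ℂ) = 1 := by
    simpa using hH.eigenvectorUnitary.2.1
  rw [specC, Matrix.trace_mul_cycle, h1, Matrix.one_mul, Matrix.trace_diagonal]

lemma specC_eigen {H : Matrix n n ℂ} (hH : H.IsHermitian) :
    specC hH (fun i => (hH.eigenvalues i : ℂ)) = H := by
  rw [specC]
  exact (hH.spectral_theorem).symm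

lemma msqrt_eq_specC {H : Matrix n n ℂ} (hH : H.PosSemidef) :
    msqrt H = specC hH.1 (fun i => (Real.sqrt (hH.1.eigenvalues i) : ℂ)) := by
  rw [msqrt_of_psd hH]
  rfl

lemma specC_mul_self {H : Matrix n n ℂ} (hH : H.IsHermitian) (f f' : n → ℂ)
    (h : (f * fun i => (hH.eigenvalues i : ℂ)) = f') : specC hH f * H = specC hH f' := by
  rw [← h, ← specC_mul hH, specC_eigen]

lemma self_mul_specC {H : Matrix n n ℂ} (hH : H.IsHermitian) (f f' : n → ℂ)
    (h : ((fun i => (hH.eigenvalues i : ℂ)) * f) = f') : H * specC hH f = specC hH f' := by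
  rw [← h, ← specC_mul hH, specC_eigen]

/-- existence of a contraction `U` realizing the trace norm: `Tr(U A) = Tr √(AᴴA)` -/
lemma exists_polar (A : Matrix n n ℂ) :
    ∃ U : Matrix n n ℂ, (U * A).trace = (msqrt (Aᴴ * A)).trace ∧
      (1 - Uᴴ * U).PosSemidef := by
  have hH : (Aᴴ * A).PosSemidef := Matrix.posSemidef_conjTranspose_mul_self A
  have hl0 : ∀ i, 0 ≤ hH.1.eigenvalues i := fun i => hH.eigenvalues_nonneg i
  let s : n → ℂ := fun i => (Real.sqrt (hH.1.eigenvalues i) : ℂ)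
  let g : n → ℂ := fun i => ((Real.sqrt (hH.1.eigenvalues i) : ℂ))⁻¹
  let e : n → ℂ := fun i => if hH.1.eigenvalues i = 0 then (0 : ℂ) else 1
  have hsne : ∀ i, hH.1.eigenvalues i ≠ 0 → (Real.sqrt (hH.1.eigenvalues i) : ℂ) ≠ 0 := by
    intro i h
    have : 0 < hH.1.eigenvalues i := lt_of_le_of_ne (hl0 i) (Ne.symm h)
    simp [Real.sqrt_ne_zero'.mpr this]
  have hgl : (g * fun i => (hH.1.eigenvalues i : ℂ)) = s := by
    funext i
    simp only [g, s, Pi.mul_apply]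
    rcases eq_or_ne (hH.1.eigenvalues i) 0 with h | h
    · simp [h]
    · field_simp
      rw [div_eq_iff (hsne i h), ← Complex.ofReal_mul, Real.mul_self_sqrt (hl0 i)]
  have hlg : ((fun i => (hH.1.eigenvalues i : ℂ)) * g) = s := by
    rw [mul_comm]; exact hgl
  have hgs : g * s = e := by
    funext i
    simp only [g, s, e, Pi.mul_apply]
    rcases eq_or_ne (hH.1.eigenvalues i) 0 with h | h
    · simp [h]
    · rw [if_neg h, inv_mul_cancel₀ (hsne i h)]
  have hge : g * e = g := by
    funext i
    simp only [g, e, Pi.mul_apply]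
    rcases eq_or_ne (hH.1.eigenvalues i) 0 with h | h
    · simp [h]
    · simp [h]
  have hstarg : star g = g := by
    funext i
    simp [g, Complex.star_def, map_inv₀, Complex.conj_ofReal]
  have hSpH : (specC hH.1 g)ᴴ = specC hH.1 g := by
    rw [specC_conjTranspose, hstarg]
  set W : Matrix n n ℂ := A * specC hH.1 g with hW
  have hUA : Wᴴ * A = specC hH.1 s := by
    rw [hW, Matrix.conjTranspose_mul, hSpH, Matrix.mul_assoc, specC_mul_self hH.1 g s hgl]
  have hWW : Wᴴ * W = specC hH.1 e := by
    rw [hW, Matrix.conjTranspose_mul, hSpH, Matrix.mul_assoc, ← Matrix.mul_assoc Aᴴ,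
      self_mul_specC hH.1 g s hlg, specC_mul, hgs]
  have hWP : W * specC hH.1 e = W := by
    rw [hW, Matrix.mul_assoc, specC_mul, hge]
  set Q : Matrix n n ℂ := W * Wᴴ with hQ
  have hQQ : Q * Q = Q := by
    have h1 : Q * Q = (W * (Wᴴ * W)) * Wᴴ := by rw [hQ]; noncomm_ring
    rw [h1, hWW, hWP]
  have hQH : Qᴴ = Q := by
    rw [hQ, Matrix.conjTranspose_mul, Matrix.conjTranspose_conjTranspose]
  refine ⟨Wᴴ, ?_, ?_⟩
  · rw [hUA, specC_trace, msqrt_eq_specC hH, specC_trace]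
  · have hexp : (1 - Wᴴᴴ * Wᴴ)ᴴ * (1 - Wᴴᴴ * Wᴴ) = 1 - Wᴴᴴ * Wᴴ := by
      rw [Matrix.conjTranspose_conjTranspose, ← hQ]
      rw [Matrix.conjTranspose_sub, Matrix.conjTranspose_one, hQH]
      have h2 : (1 - Q) * (1 - Q) = 1 - Q - Q + Q * Q := by noncomm_ring
      rw [h2, hQQ]
      abel
    have h3 := Matrix.posSemidef_conjTranspose_mul_self (1 - Wᴴᴴ * Wᴴ)
    rw [hexp] at h3
    rwa [Matrix.conjTranspose_conjTranspose, ← hQ] at h3 ⊢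

end Polar

/-! ### Fidelity bounds -/

section Fidelity

set_option linter.unusedSectionVars false

variable {n : Type*} [Fintype n] [DecidableEq n]

lemma trNorm_nonneg (M : Matrix n n ℂ) : 0 ≤ trNorm M := by
  have h := psd_trace_nonneg (msqrt_psd (Matrix.posSemidef_conjTranspose_mul_self M))
  rw [Complex.le_def] at h
  simpa [trNorm] using h.1

lemma Fid_nonneg (ρ σ : Matrix n n ℂ) : 0 ≤ Fid ρ σ := trNorm_nonneg _

lemma trace_herm_prod_sum (X Y : Matrix n n ℂ) :
    (Xᴴ * Y).trace = ∑ p : n × n, (starRingEnd ℂ) (X p.1 p.2) * Y p.1 p.2 := by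
  simp only [Matrix.trace, Matrix.diag, Matrix.mul_apply, Matrix.conjTranspose_apply,
    Fintype.sum_prod_type]
  exact Finset.sum_comm

lemma trace_CS (B C : Matrix n n ℂ) :
    ((Bᴴ * C).trace).re ≤ Real.sqrt ((Bᴴ * B).trace.re) * Real.sqrt ((Cᴴ * C).trace.re) := by
  let f : EuclideanSpace ℂ (n × n) := WithLp.toLp 2 (fun p : n × n => B p.1 p.2)
  let g : EuclideanSpace ℂ (n × n) := WithLp.toLp 2 (fun p : n × n => C p.1 p.2)
  have hnorm : ∀ (X : Matrix n n ℂ) (x : EuclideanSpace ℂ (n × n)), (∀ p, x p = X p.1 p.2) →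
      Real.sqrt ((Xᴴ * X).trace.re) = ‖x‖ := by
    intro X x hx
    rw [EuclideanSpace.norm_eq]
    simp only [hx]
    congr 1
    rw [trace_herm_prod_sum, Complex.re_sum]
    refine Finset.sum_congr rfl fun p _ => ?_
    rw [Complex.conj_mul']
    simp [← Complex.ofReal_pow, Complex.sq_norm]
  have hinner : (inner ℂ f g : ℂ) = (Bᴴ * C).trace := by
    rw [trace_herm_prod_sum]
    simp [f, g, PiLp.inner_apply, RCLike.inner_apply, mul_comm]
  calc ((Bᴴ * C).trace).re = (inner ℂ f g : ℂ).re := by rw [hinner]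
    _ ≤ ‖(inner ℂ f g : ℂ)‖ := Complex.re_le_norm _
    _ ≤ ‖f‖ * ‖g‖ := norm_inner_le_norm f g
    _ = Real.sqrt ((Bᴴ * B).trace.re) * Real.sqrt ((Cᴴ * C).trace.re) := by
        rw [hnorm B f fun _ => rfl, hnorm C g fun _ => rfl]

lemma trace_CS' (Z C : Matrix n n ℂ) :
    ((Z * C).trace).re ≤ Real.sqrt ((Z * Zᴴ).trace.re) * Real.sqrt ((Cᴴ * C).trace.re) := by
  have := trace_CS Zᴴ C
  rwa [Matrix.conjTranspose_conjTranspose] at this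

lemma trace_sqrt_conj {Y E : Matrix n n ℂ} (hY : Y.PosSemidef) (hE : E.PosSemidef) :
    ((msqrt E * msqrt Y)ᴴ * (msqrt E * msqrt Y)).trace = (E * Y).trace := by
  rw [Matrix.conjTranspose_mul, msqrt_herm hY, msqrt_herm hE]
  rw [Matrix.mul_assoc, Matrix.trace_mul_comm]
  rw [← Matrix.mul_assoc (msqrt E) (msqrt E), msqrt_mul_self hE, Matrix.mul_assoc,
    msqrt_mul_self hY]

lemma trace_conj_bound {X E U : Matrix n n ℂ} (hX : X.PosSemidef) (hE : E.PosSemidef)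
    (hU : (1 - Uᴴ * U).PosSemidef) :
    ((U * msqrt X * msqrt E) * (U * msqrt X * msqrt E)ᴴ).trace.re ≤ (E * X).trace.re := by
  set SX := msqrt X with hSX
  set SE := msqrt E with hSE
  have hZZ : (U * SX * SE) * (U * SX * SE)ᴴ = (U * (SX * (E * SX))) * Uᴴ := by
    conv_rhs => rw [← msqrt_mul_self hE, ← hSE]
    simp only [Matrix.conjTranspose_mul, hSX, hSE, msqrt_herm hX, msqrt_herm hE,
      Matrix.mul_assoc]
  have hMpsd : (SX * (E * SX)).PosSemidef := by
    have := hE.conjTranspose_mul_mul_same SX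
    rwa [hSX, msqrt_herm hX, ← hSX, Matrix.mul_assoc] at this
  have htr1 : ((U * SX * SE) * (U * SX * SE)ᴴ).trace
      = ((Uᴴ * U) * (SX * (E * SX))).trace := by
    rw [hZZ, Matrix.trace_mul_comm, ← Matrix.mul_assoc]
  have hgap : 0 ≤ ((1 - Uᴴ * U) * (SX * (E * SX))).trace.re :=
    trace_mul_psd_re_nonneg hU hMpsd
  have hexpand : (SX * (E * SX)).trace
      = ((Uᴴ * U) * (SX * (E * SX))).trace + ((1 - Uᴴ * U) * (SX * (E * SX))).trace := by
    rw [← Matrix.trace_add, ← Matrix.add_mul, add_sub_cancel, Matrix.one_mul]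
  have hMX : (SX * (E * SX)).trace = (E * X).trace := by
    rw [Matrix.trace_mul_comm, Matrix.mul_assoc, msqrt_mul_self hX]
  have := congrArg Complex.re hexpand
  rw [hMX, Complex.add_re] at this
  rw [htr1]
  linarith

lemma fid_le_measured {X Y E : Matrix n n ℂ} (hX : X.PosSemidef) (hY : Y.PosSemidef)
    (hE : E.PosSemidef) (hE1 : (1 - E).PosSemidef)
    (hEX : 0 ≤ (E * X).trace.re) (hEY : 0 ≤ (E * Y).trace.re) :
    Fid X Y ≤ Real.sqrt ((E * X).trace.re * (E * Y).trace.re)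
      + Real.sqrt (((1 - E) * X).trace.re * ((1 - E) * Y).trace.re) := by
  set SX := msqrt X with hSX
  set SY := msqrt Y with hSY
  set SE := msqrt E with hSE
  set SF := msqrt (1 - E) with hSF
  obtain ⟨U, hU1, hU2⟩ := exists_polar (SX * SY)
  have hFid : Fid X Y = ((U * (SX * SY)).trace).re := by
    rw [Fid, trNorm, hU1]
  have hone : SE * SE + SF * SF = 1 := by
    rw [hSE, hSF, msqrt_mul_self hE, msqrt_mul_self hE1, add_sub_cancel]
  have hsplit : U * (SX * SY) = (U * SX * SE) * (SE * SY) + (U * SX * SF) * (SF * SY) := by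
    have h0 : U * (SX * SY) = U * SX * (SE * SE + SF * SF) * SY := by
      rw [hone]
      simp only [Matrix.mul_one, Matrix.mul_assoc]
    rw [h0]
    noncomm_ring
  have hterm : ∀ (G : Matrix n n ℂ), G.PosSemidef →
      (((U * SX * msqrt G) * (msqrt G * SY)).trace).re
        ≤ Real.sqrt ((G * X).trace.re) * Real.sqrt ((G * Y).trace.re) := by
    intro G hG
    calc (((U * SX * msqrt G) * (msqrt G * SY)).trace).re
        ≤ Real.sqrt (((U * SX * msqrt G) * (U * SX * msqrt G)ᴴ).trace.re)
          * Real.sqrt (((msqrt G * SY)ᴴ * (msqrt G * SY)).trace.re) := trace_CS' _ _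
      _ ≤ Real.sqrt ((G * X).trace.re) * Real.sqrt ((G * Y).trace.re) := by
          apply mul_le_mul
          · exact Real.sqrt_le_sqrt (trace_conj_bound hX hG hU2)
          · rw [trace_sqrt_conj hY hG]
          · exact Real.sqrt_nonneg _
          · exact Real.sqrt_nonneg _
  have h1 := hterm E hE
  have h2 := hterm (1 - E) hE1
  rw [← hSE] at h1
  rw [← hSF] at h2
  rw [hFid, hsplit, Matrix.trace_add, Complex.add_re]
  rw [Real.sqrt_mul hEX, Real.sqrt_mul (trace_mul_psd_re_nonneg hE1 hX)]
  linarith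

end Fidelity

/-! ### plumbing for the specific states -/

section App

set_option linter.unusedSectionVars false

variable {d : ℕ} [NeZero d] {β γ : Type*} [Fintype β] [DecidableEq β] [Fintype γ] [DecidableEq γ]

lemma projZ_apply (z i j : Fin d) : projZ d z i j = if i = z ∧ j = z then 1 else 0 := by
  simp only [projZ, Matrix.vecMulVec_apply, ketZ, Pi.star_apply]
  simp only [apply_ite star, star_one, star_zero, ite_mul, one_mul, zero_mul, mul_ite, mul_one,
    mul_zero]
  by_cases h1 : j = z <;> by_cases h2 : i = z <;> simp [h1, h2]

lemma projZ_herm (z : Fin d) : (projZ d z)ᴴ = projZ d z := by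
  ext i j
  rw [Matrix.conjTranspose_apply, projZ_apply, projZ_apply]
  by_cases h1 : i = z <;> by_cases h2 : j = z <;> simp [h1, h2]

lemma projZ_mul_self (z : Fin d) : projZ d z * projZ d z = projZ d z := by
  ext i j
  simp only [Matrix.mul_apply, projZ_apply]
  rw [Finset.sum_eq_single z]
  · by_cases h1 : i = z <;> by_cases h2 : j = z <;> simp [h1, h2]
  · intro b _ hb; simp [hb]
  · simp

lemma projZ_psd (z : Fin d) : (projZ d z).PosSemidef := by
  have := Matrix.posSemidef_conjTranspose_mul_self (projZ d z)
  rwa [projZ_herm, projZ_mul_self] at this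

lemma projZ_trace (z : Fin d) : (projZ d z).trace = 1 := by
  simp only [Matrix.trace, Matrix.diag, projZ_apply]
  rw [Finset.sum_eq_single z] <;> simp +contextual

lemma projZ_sum : ∑ z : Fin d, projZ d z = (1 : Matrix (Fin d) (Fin d) ℂ) := by
  ext i j
  simp only [Finset.sum_apply, Matrix.sum_apply, projZ_apply, Matrix.one_apply]
  rw [Finset.sum_eq_single i] <;> simp +contextual [eq_comm]

lemma psd_sum {ι : Type*} (s : Finset ι) (f : ι → Matrix γ γ ℂ)
    (h : ∀ i ∈ s, (f i).PosSemidef) : (∑ i ∈ s, f i).PosSemidef :=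
  Finset.sum_induction f _ (fun _ _ ha hb => ha.add hb) Matrix.PosSemidef.zero h

lemma povm_compl_psd {Λ : Fin d → Matrix γ γ ℂ} (hΛ : IsPOVM Λ) (z : Fin d) :
    (1 - Λ z).PosSemidef := by
  have h : (1 : Matrix γ γ ℂ) - Λ z = ∑ w ∈ Finset.univ.erase z, Λ w := by
    rw [← hΛ.2, Finset.sum_erase_eq_sub (Finset.mem_univ z)]
  rw [h]
  exact psd_sum _ _ fun i _ => hΛ.1 i

lemma sum_kronecker {ι : Type*} (s : Finset ι) (f : ι → Matrix (Fin d) (Fin d) ℂ)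
    (B : Matrix γ γ ℂ) : (∑ i ∈ s, f i) ⊗ₖ B = ∑ i ∈ s, f i ⊗ₖ B := by
  ext ⟨a, c⟩ ⟨a', c'⟩
  simp [Matrix.sum_apply, Finset.sum_mul]

lemma kronecker_sub (A : Matrix (Fin d) (Fin d) ℂ) (B C : Matrix γ γ ℂ) :
    A ⊗ₖ (B - C) = A ⊗ₖ B - A ⊗ₖ C := by
  ext ⟨a, c⟩ ⟨a', c'⟩
  simp [Matrix.sub_apply, mul_sub]

lemma ups_apply (Λ : Fin d → Matrix γ γ ℂ) (a a' : Fin d) (c c' : γ) :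
    (∑ z, projZ d z ⊗ₖ Λ z) (a, c) (a', c') = if a = a' then Λ a c c' else 0 := by
  simp only [Matrix.sum_apply, Matrix.kroneckerMap_apply, projZ_apply, ite_mul, one_mul, zero_mul]
  rw [Finset.sum_eq_single a]
  · by_cases h : a = a' <;> simp [h, eq_comm]
  · intro b _ hb; simp [Ne.symm hb]
  · simp

lemma dephA_apply (M : Matrix (Fin d × γ) (Fin d × γ) ℂ) (a a' : Fin d) (c c' : γ) :
    dephA M (a, c) (a', c') = if a = a' then M (a, c) (a', c') else 0 := by
  simp only [dephA, Matrix.sum_apply, Matrix.mul_apply, Matrix.kroneckerMap_apply, projZ_apply,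
    Matrix.one_apply, Fintype.sum_prod_type, ite_mul, zero_mul, one_mul, mul_ite, mul_zero,
    mul_one, Finset.sum_ite_eq, Finset.sum_ite_eq', Finset.mem_univ, if_true]
  rw [Finset.sum_eq_single a]
  · by_cases h : a = a' <;> simp [h, eq_comm]
  · intro b _ hb; simp [Ne.symm hb]
  · simp

lemma trace_ups (Λ : Fin d → Matrix γ γ ℂ) (N : Matrix (Fin d × γ) (Fin d × γ) ℂ) :
    ((∑ z, projZ d z ⊗ₖ Λ z) * N).trace = ∑ a, ∑ c, ∑ c', Λ a c c' * N (a, c') (a, c) := by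
  simp only [Matrix.trace, Matrix.diag, Matrix.mul_apply, Fintype.sum_prod_type, ups_apply,
    ite_mul, zero_mul, Finset.sum_ite_eq, Finset.mem_univ, if_true]
  refine Finset.sum_congr rfl fun a _ => Finset.sum_congr rfl fun c _ => ?_
  rw [Finset.sum_comm]
  simp [Finset.sum_ite_eq]

lemma trace_ups_deph (Λ : Fin d → Matrix γ γ ℂ) (N : Matrix (Fin d × γ) (Fin d × γ) ℂ) :
    ((∑ z, projZ d z ⊗ₖ Λ z) * dephA N).trace = ((∑ z, projZ d z ⊗ₖ Λ z) * N).trace := by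
  rw [trace_ups, trace_ups]
  refine Finset.sum_congr rfl fun a _ => Finset.sum_congr rfl fun c _ =>
    Finset.sum_congr rfl fun c' _ => ?_
  rw [dephA_apply, if_pos rfl]

lemma dephA_trace (M : Matrix (Fin d × γ) (Fin d × γ) ℂ) : (dephA M).trace = M.trace := by
  simp only [Matrix.trace, Matrix.diag, Fintype.sum_prod_type]
  refine Finset.sum_congr rfl fun a _ => Finset.sum_congr rfl fun c _ => ?_
  rw [dephA_apply, if_pos rfl]

lemma dephA_psd {M : Matrix (Fin d × γ) (Fin d × γ) ℂ} (hM : M.PosSemidef) :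
    (dephA M).PosSemidef := by
  refine psd_sum _ _ fun z _ => ?_
  have hB : (projZ d z ⊗ₖ (1 : Matrix γ γ ℂ))ᴴ = projZ d z ⊗ₖ (1 : Matrix γ γ ℂ) := by
    rw [kron_conjTranspose, projZ_herm, Matrix.conjTranspose_one]
  have := hM.conjTranspose_mul_mul_same (projZ d z ⊗ₖ (1 : Matrix γ γ ℂ))
  rwa [hB] at this

lemma ptrB_trace (ψ : Matrix (Fin d × β × γ) (Fin d × β × γ) ℂ) :
    (ptrB ψ).trace = ψ.trace := by
  simp only [Matrix.trace, Matrix.diag, ptrB, Fintype.sum_prod_type]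
  exact Finset.sum_congr rfl fun a _ => Finset.sum_comm

lemma ptrB_psd {ψ : Matrix (Fin d × β × γ) (Fin d × β × γ) ℂ} (hψ : ψ.PosSemidef) :
    (ptrB ψ).PosSemidef := by
  have hrep : ptrB ψ = ∑ b : β,
      (Matrix.of fun (P : Fin d × β × γ) (p : Fin d × γ) =>
        if P = (p.1, b, p.2) then (1 : ℂ) else 0)ᴴ * ψ *
      (Matrix.of fun (P : Fin d × β × γ) (p : Fin d × γ) =>
        if P = (p.1, b, p.2) then (1 : ℂ) else 0) := by
    ext p q
    simp only [ptrB, Matrix.sum_apply, Matrix.mul_apply, Matrix.conjTranspose_apply,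
      Matrix.of_apply, apply_ite star, star_one, star_zero, ite_mul, one_mul, zero_mul,
      mul_ite, mul_zero, mul_one, Finset.sum_ite_eq, Finset.sum_ite_eq', Finset.mem_univ,
      if_true]
  rw [hrep]
  exact psd_sum _ _ fun b _ => hψ.conjTranspose_mul_mul_same _

lemma trace_ABE (X : Matrix (Fin d) (Fin d) ℂ) (Y : Matrix γ γ ℂ)
    (ψ : Matrix (Fin d × β × γ) (Fin d × β × γ) ℂ) :
    ((X ⊗ₖ ((1 : Matrix β β ℂ) ⊗ₖ Y)) * ψ).trace = ((X ⊗ₖ Y) * ptrB ψ).trace := by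
  simp only [Matrix.trace, Matrix.diag, Matrix.mul_apply, Matrix.kroneckerMap_apply,
    Matrix.one_apply, ptrB, Fintype.sum_prod_type, ite_mul, zero_mul, one_mul, mul_ite, mul_zero,
    mul_one, Finset.mul_sum, Finset.sum_ite_eq, Finset.sum_ite_eq', Finset.mem_univ, if_true]
  refine Finset.sum_congr rfl fun a _ => ?_
  refine Eq.trans (Finset.sum_congr rfl fun b _ => Finset.sum_congr rfl fun c _ =>
    Finset.sum_congr rfl fun a' _ => Finset.sum_comm) ?_
  simp only [Finset.sum_ite_eq, Finset.mem_univ, if_true]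
  rw [Finset.sum_comm]
  refine Finset.sum_congr rfl fun c _ => ?_
  rw [Finset.sum_comm]
  refine Finset.sum_congr rfl fun a' _ => ?_
  rw [Finset.sum_comm]


lemma trace_ups_pi {Λ : Fin d → Matrix γ γ ℂ} (hΛ : IsPOVM Λ) (σ : Matrix γ γ ℂ) :
    ((∑ z, projZ d z ⊗ₖ Λ z) * ((1 : Matrix (Fin d) (Fin d) ℂ) ⊗ₖ σ)).trace = σ.trace := by
  rw [Finset.sum_mul, Matrix.trace_sum]
  have h : ∀ z, ((projZ d z ⊗ₖ Λ z) * ((1 : Matrix (Fin d) (Fin d) ℂ) ⊗ₖ σ)).trace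
      = (Λ z * σ).trace := by
    intro z
    rw [← Matrix.mul_kronecker_mul, Matrix.trace_kronecker, Matrix.mul_one, projZ_trace, one_mul]
  simp_rw [h]
  rw [← Matrix.trace_sum, ← Finset.sum_mul, hΛ.2, Matrix.one_mul]

lemma ups_compl_psd {Λ : Fin d → Matrix γ γ ℂ} (hΛ : IsPOVM Λ) :
    ((1 : Matrix (Fin d × γ) (Fin d × γ) ℂ) - ∑ z, projZ d z ⊗ₖ Λ z).PosSemidef := by
  have h1 : (1 : Matrix (Fin d × γ) (Fin d × γ) ℂ) = ∑ z, projZ d z ⊗ₖ (1 : Matrix γ γ ℂ) := by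
    rw [← sum_kronecker, projZ_sum, Matrix.one_kronecker_one]
  have h2 : (1 : Matrix (Fin d × γ) (Fin d × γ) ℂ) - ∑ z, projZ d z ⊗ₖ Λ z
      = ∑ z, projZ d z ⊗ₖ ((1 : Matrix γ γ ℂ) - Λ z) := by
    rw [h1, ← Finset.sum_sub_distrib]
    exact Finset.sum_congr rfl fun z _ => (kronecker_sub _ _ _).symm
  rw [h2]
  exact psd_sum _ _ fun z _ => psd_kron (projZ_psd z) (povm_compl_psd hΛ z)

lemma psd_smul_real {M : Matrix γ γ ℂ} (hM : M.PosSemidef) {c : ℝ} (hc : 0 ≤ c) :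
    (((c : ℂ)) • M).PosSemidef := by
  exact hM.smul (Complex.zero_le_real.mpr hc)

lemma povm_trivial : IsPOVM (fun z : Fin d => if z = 0 then (1 : Matrix γ γ ℂ) else 0) := by
  constructor
  · intro z
    simp only []
    split_ifs
    · exact Matrix.PosSemidef.one
    · exact Matrix.PosSemidef.zero
  · simp [Finset.sum_ite_eq']

end App
set_option maxHeartbeats 1000000

/-- for any POVM {Λ_z} on E with Υ = Σ_z |z⟩⟨z| ⊗ Λ_z and any state σ^E,
Tr[Υ(ψ_Z^{AE} − π^A ⊗ σ^E)] = Σ_z Tr[(|z⟩⟨z| ⊗ Λ_z)ψ^{AE}] − 1/d; consequently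
(P(Z^A|E)_ψ − 1/d)² + F(ψ_Z^{AE}, π^A ⊗ σ^E)² ≤ 1. -/
theorem guessing_fidelity_tradeoff {d : ℕ} [NeZero d]
    {β γ : Type*} [Fintype β] [DecidableEq β] [Fintype γ] [DecidableEq γ]
    (ψ : Matrix (Fin d × β × γ) (Fin d × β × γ) ℂ)
    (hψ : ψ.PosSemidef) (hψ1 : ψ.trace = 1)
    (Λ : Fin d → Matrix γ γ ℂ) (hΛ : IsPOVM Λ)
    (σ : Matrix γ γ ℂ) (hσ : σ.PosSemidef) (hσ1 : σ.trace = 1) :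
    (Matrix.trace ((∑ z, projZ d z ⊗ₖ Λ z) *
        (psiZAE ψ - (1 / (d : ℂ)) • ((1 : Matrix (Fin d) (Fin d) ℂ) ⊗ₖ σ)))).re
      = (∑ z, Matrix.trace ((projZ d z ⊗ₖ Λ z) * ptrB ψ)).re - 1 / d ∧
    (PZ_E ψ - 1 / d) ^ 2 +
        Fid (psiZAE ψ) ((1 / (d : ℂ)) • ((1 : Matrix (Fin d) (Fin d) ℂ) ⊗ₖ σ)) ^ 2 ≤ 1 := by
  have hd0 : (0 : ℝ) < d := Nat.cast_pos.mpr (Nat.pos_of_ne_zero (NeZero.ne d))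
  have hdC : (d : ℂ) ≠ 0 := Nat.cast_ne_zero.mpr (NeZero.ne d)
  set ρ : Matrix (Fin d × γ) (Fin d × γ) ℂ := psiZAE ψ with hρ
  set τ : Matrix (Fin d × γ) (Fin d × γ) ℂ :=
    (1 / (d : ℂ)) • ((1 : Matrix (Fin d) (Fin d) ℂ) ⊗ₖ σ) with hτ
  have hρpsd : ρ.PosSemidef := dephA_psd (ptrB_psd hψ)
  have hρtr : ρ.trace = 1 := by rw [hρ, psiZAE, dephA_trace, ptrB_trace, hψ1]
  have hcoe : (1 / (d : ℂ)) = (((1 / d : ℝ)) : ℂ) := by push_cast; ring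
  have hτpsd : τ.PosSemidef := by
    rw [hτ, hcoe]
    exact psd_smul_real (psd_kron Matrix.PosSemidef.one hσ) (by positivity)
  have hτtr : τ.trace = 1 := by
    rw [hτ, Matrix.trace_smul, Matrix.trace_kronecker, Matrix.trace_one, hσ1, mul_one,
      smul_eq_mul]
    simp only [Fintype.card_fin]
    field_simp
  have hre : (1 / (d : ℂ)).re = 1 / (d : ℝ) := by rw [hcoe, Complex.ofReal_re]
  -- generic facts for an arbitrary POVM on γ
  have key : ∀ Λ' : Fin d → Matrix γ γ ℂ, IsPOVM Λ' →
      ((((∑ z, projZ d z ⊗ₖ Λ' z) * ρ).trace.re) - 1 / d) ^ 2 + Fid ρ τ ^ 2 ≤ 1 := by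
    intro Λ' hΛ'
    set U : Matrix (Fin d × γ) (Fin d × γ) ℂ := ∑ z, projZ d z ⊗ₖ Λ' z with hUdef
    have hUpsd : U.PosSemidef :=
      psd_sum _ _ fun z _ => psd_kron (projZ_psd z) (hΛ'.1 z)
    have hU1psd : ((1 : Matrix (Fin d × γ) (Fin d × γ) ℂ) - U).PosSemidef := ups_compl_psd hΛ'
    set p : ℝ := ((U * ρ).trace).re with hp
    have hp0 : 0 ≤ p := trace_mul_psd_re_nonneg hUpsd hρpsd
    have hsplitρ : (U * ρ).trace + (((1 : Matrix (Fin d × γ) (Fin d × γ) ℂ) - U) * ρ).trace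
        = 1 := by
      rw [← Matrix.trace_add, ← Matrix.add_mul, add_sub_cancel, Matrix.one_mul, hρtr]
    have hcompl0 : 0 ≤ ((((1 : Matrix (Fin d × γ) (Fin d × γ) ℂ) - U) * ρ).trace).re :=
      trace_mul_psd_re_nonneg hU1psd hρpsd
    have hcomplre : ((((1 : Matrix (Fin d × γ) (Fin d × γ) ℂ) - U) * ρ).trace).re = 1 - p := by
      have := congrArg Complex.re hsplitρ
      rw [Complex.add_re, Complex.one_re] at this
      linarith
    have hp1 : p ≤ 1 := by linarith
    have hUτ : (U * τ).trace = 1 / (d : ℂ) := by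
      rw [hτ, Matrix.mul_smul, Matrix.trace_smul, trace_ups_pi hΛ', hσ1, smul_eq_mul, mul_one]
    have hUτre : ((U * τ).trace).re = 1 / d := by rw [hUτ, hre]
    have hsplitτ : (U * τ).trace + (((1 : Matrix (Fin d × γ) (Fin d × γ) ℂ) - U) * τ).trace
        = 1 := by
      rw [← Matrix.trace_add, ← Matrix.add_mul, add_sub_cancel, Matrix.one_mul, hτtr]
    have hcomplτre : ((((1 : Matrix (Fin d × γ) (Fin d × γ) ℂ) - U) * τ).trace).re
        = 1 - 1 / d := by
      have := congrArg Complex.re hsplitτ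
      rw [Complex.add_re, Complex.one_re, hUτre] at this
      linarith
    have hFb := fid_le_measured hρpsd hτpsd hUpsd hU1psd hp0 (by rw [hUτre]; positivity)
    rw [hUτre, hcomplre, hcomplτre] at hFb
    -- now pure real algebra
    set q : ℝ := 1 / (d : ℝ) with hq
    have hq0 : 0 ≤ q := by positivity
    have hq1 : q ≤ 1 := by
      rw [hq, div_le_one hd0]
      exact_mod_cast Nat.one_le_iff_ne_zero.mpr (NeZero.ne d)
    set u : ℝ := Real.sqrt (p * q) with hu
    set v : ℝ := Real.sqrt ((1 - p) * (1 - q)) with hv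
    clear_value p
    have hu0 : 0 ≤ u := Real.sqrt_nonneg _
    have hv0 : 0 ≤ v := Real.sqrt_nonneg _
    have hu2 : u ^ 2 = p * q := Real.sq_sqrt (by positivity)
    have hv2 : v ^ 2 = (1 - p) * (1 - q) := Real.sq_sqrt (by nlinarith)
    clear_value u v
    have hF0 : 0 ≤ Fid ρ τ := Fid_nonneg _ _
    have hF2 : Fid ρ τ ^ 2 ≤ (u + v) ^ 2 := by
      have : Fid ρ τ ≤ u + v := hFb
      nlinarith
    have huv2 : (u * v) ^ 2 = (p * (1 - p)) * (q * (1 - q)) := by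
      rw [mul_pow, hu2, hv2]; ring
    have hkey2 : 2 * (u * v) ≤ p * (1 - p) + q * (1 - q) := by
      nlinarith [sq_nonneg (p * (1 - p) - q * (1 - q)), mul_nonneg hu0 hv0,
        mul_nonneg hp0 (by linarith : (0:ℝ) ≤ 1 - p),
        mul_nonneg hq0 (by linarith : (0:ℝ) ≤ 1 - q)]
    nlinarith [hF2, hu2, hv2, hkey2]
  constructor
  · -- part 1
    have h1 : ((∑ z, projZ d z ⊗ₖ Λ z) * (ρ - τ)).trace
        = (∑ z, ((projZ d z ⊗ₖ Λ z) * ptrB ψ).trace) - 1 / (d : ℂ) := by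
      rw [Matrix.mul_sub, Matrix.trace_sub]
      congr 1
      · rw [hρ, psiZAE, trace_ups_deph, Finset.sum_mul, Matrix.trace_sum]
      · rw [hτ, Matrix.mul_smul, Matrix.trace_smul, trace_ups_pi hΛ, hσ1, smul_eq_mul, mul_one]
    rw [h1, Complex.sub_re, hre]
  · -- part 2
    set F : ℝ := Fid ρ τ with hF
    have hF2le : F ^ 2 ≤ 1 := by
      have h := key _ (povm_trivial (d := d) (γ := γ))
      nlinarith [sq_nonneg ((((∑ z, projZ d z ⊗ₖ
        (fun w : Fin d => if w = 0 then (1 : Matrix γ γ ℂ) else 0) z) * ρ).trace.re) - 1 / d)]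
    set c : ℝ := Real.sqrt (1 - F ^ 2) with hc
    have hc0 : 0 ≤ c := Real.sqrt_nonneg _
    have hc2 : c ^ 2 = 1 - F ^ 2 := Real.sq_sqrt (by linarith)
    set S : Set ℝ := { r | ∃ Λ' : Fin d → Matrix γ γ ℂ, IsPOVM Λ' ∧
      r = (Matrix.trace ((∑ z, projZ d z ⊗ₖ ((1 : Matrix β β ℂ) ⊗ₖ Λ' z)) * ψ)).re } with hS
    have hPZ : PZ_E ψ = sSup S := rfl
    have hmem : ∀ r ∈ S, (r - 1 / d) ^ 2 + F ^ 2 ≤ 1 := by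
      rintro r ⟨Λ', hΛ', rfl⟩
      have hr : (Matrix.trace ((∑ z, projZ d z ⊗ₖ ((1 : Matrix β β ℂ) ⊗ₖ Λ' z)) * ψ))
          = ((∑ z, projZ d z ⊗ₖ Λ' z) * ρ).trace := by
        rw [Finset.sum_mul, Matrix.trace_sum]
        have : ∀ z, ((projZ d z ⊗ₖ ((1 : Matrix β β ℂ) ⊗ₖ Λ' z)) * ψ).trace
            = ((projZ d z ⊗ₖ Λ' z) * ptrB ψ).trace := fun z => trace_ABE _ _ _
        simp_rw [this]
        rw [← Matrix.trace_sum, ← Finset.sum_mul, hρ, psiZAE, trace_ups_deph]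
      rw [hr]
      exact key Λ' hΛ'
    have habs : ∀ r ∈ S, |r - 1 / d| ≤ c := by
      intro r hr
      have h := hmem r hr
      have : (r - 1 / d) ^ 2 ≤ c ^ 2 := by rw [hc2]; linarith
      calc |r - 1 / d| = Real.sqrt ((r - 1 / d) ^ 2) := (Real.sqrt_sq_eq_abs _).symm
        _ ≤ Real.sqrt (c ^ 2) := Real.sqrt_le_sqrt this
        _ = c := by rw [Real.sqrt_sq hc0]
    -- the trivial POVM gives a member of S
    have hr0mem : (Matrix.trace ((∑ z, projZ d z ⊗ₖ ((1 : Matrix β β ℂ) ⊗ₖ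
        (fun w : Fin d => if w = 0 then (1 : Matrix γ γ ℂ) else 0) z)) * ψ)).re ∈ S :=
      ⟨_, povm_trivial, rfl⟩
    have hSne : S.Nonempty := ⟨_, hr0mem⟩
    have hub : ∀ r ∈ S, r ≤ 1 / d + c := by
      intro r hr
      have := habs r hr
      have := abs_le.mp this
      linarith [this.2]
    have hbdd : BddAbove S := ⟨1 / d + c, hub⟩
    have hsup_le : sSup S ≤ 1 / d + c := csSup_le hSne hub
    have hle_sup : 1 / d - c ≤ sSup S := by
      refine le_trans ?_ (le_csSup hbdd hr0mem)
      have := abs_le.mp (habs _ hr0mem)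
      linarith [this.1]
    rw [hPZ]
    have hsq : (sSup S - 1 / d) ^ 2 ≤ c ^ 2 := by
      apply sq_le_sq'
      · linarith
      · linarith
    rw [hc2] at hsq
    linarith
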